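/- Let t ≥ 2 be an integer, let G be a finite simple graph, and let x be a vertex of G with d(x) > 0 such that d(v) ≥ d(x) for every neighbor v of x. Then ∑_{v ∈ N(x)} ( (1/(t·d(v))) · C(d(v), t−1) − (1/d(v)) · C(d(v), t−1) ) + C(d(x), t−1) ≤ (1/t) · C(d(x), t−1). -/

import Mathlib

open SimpleGraph Finset

lemma aux_choose (t n : ℕ) (ht : 2 ≤ t) (hn : 1 ≤ n) :
    (n : ℚ) * ((n - 1).choose (t - 2) : ℚ) = ((t : ℚ) - 1) * ((n.choose (t - 1)) : ℚ) := by
  have h := Nat.add_one_mul_choose_eq (n - 1) (t - 2)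
  have h1 : n - 1 + 1 = n := by omega
  have h2 : t - 2 + 1 = t - 1 := by omega
  rw [h1, h2] at h
  have hq := congrArg (fun k : ℕ => (k : ℚ)) h
  push_cast at hq
  have hc : ((t : ℚ) - 1) = ((t - 1 : ℕ) : ℚ) := by
    have h1t : (1:ℕ) ≤ t := by omega
    push_cast [h1t]; ring
  rw [hc]
  linarith [hq]

theorem stmt_10 {V : Type*} [Fintype V] [DecidableEq V] (G : SimpleGraph V)
    [DecidableRel G.Adj] (t : ℕ) (ht : 2 ≤ t) (x : V) (hx : 0 < G.degree x)
    (hmin : ∀ v ∈ G.neighborFinset x, G.degree x ≤ G.degree v) :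
    (∑ v ∈ G.neighborFinset x,
        ((1 / (t * G.degree v) : ℚ) * ((G.degree v).choose (t - 1) : ℚ) -
          (1 / (G.degree v) : ℚ) * ((G.degree v).choose (t - 1) : ℚ))) +
        ((G.degree x).choose (t - 1) : ℚ) ≤
      (1 / t) * ((G.degree x).choose (t - 1) : ℚ) := by
  have htq : (0:ℚ) < (t:ℚ) := by exact_mod_cast (by omega : 0 < t)
  set d := G.degree x with hd
  set B : ℚ := ((d - 1).choose (t - 2) : ℚ) with hB
  have key : ∀ v ∈ G.neighborFinset x,
      ((1 / (t * G.degree v) : ℚ) * ((G.degree v).choose (t - 1) : ℚ) -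
        (1 / (G.degree v) : ℚ) * ((G.degree v).choose (t - 1) : ℚ)) ≤ -B / t := by
    intro v hv
    set n := G.degree v with hn
    have hn1 : 1 ≤ n := le_trans hx (hmin v hv)
    have hnq : (0:ℚ) < (n:ℚ) := by exact_mod_cast (by omega : 0 < n)
    have hid := aux_choose t n ht hn1
    have heq : (1 / (t * n) : ℚ) * ((n.choose (t - 1)) : ℚ) -
        (1 / (n) : ℚ) * ((n.choose (t - 1)) : ℚ) = -((n - 1).choose (t - 2) : ℚ) / t := by
      have hnne : (n:ℚ) ≠ 0 := ne_of_gt hnq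
      have htne : (t:ℚ) ≠ 0 := ne_of_gt htq
      field_simp
      linear_combination hid
    rw [heq]
    have hdn : d ≤ n := hmin v hv
    have hmono : B ≤ ((n - 1).choose (t - 2) : ℚ) := by
      rw [hB]
      exact_mod_cast Nat.choose_le_choose (t - 2) (by omega : d - 1 ≤ n - 1)
    exact (div_le_div_iff_of_pos_right htq).mpr (neg_le_neg hmono)
  have hsum := Finset.sum_le_card_nsmul (G.neighborFinset x) _ (-B / t) key
  rw [G.card_neighborFinset_eq_degree x] at hsum
  have hcard : (d : ℚ) * (-B / t) = (-(((t:ℚ) - 1) * ((d.choose (t - 1)) : ℚ))) / t := by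
    have h2 := aux_choose t d ht (by omega)
    rw [hB]
    linear_combination (-(1:ℚ)/t) * h2
  have hsum' : (∑ v ∈ G.neighborFinset x,
      ((1 / (t * G.degree v) : ℚ) * ((G.degree v).choose (t - 1) : ℚ) -
        (1 / (G.degree v) : ℚ) * ((G.degree v).choose (t - 1) : ℚ)))
      ≤ (-(((t:ℚ) - 1) * ((d.choose (t - 1)) : ℚ))) / t := by
    calc _ ≤ (d : ℚ) * (-B / t) := by simpa [nsmul_eq_mul] using hsum
    _ = _ := hcard
  have hfin : (-(((t:ℚ) - 1) * ((d.choose (t - 1)) : ℚ))) / t + ((d.choose (t - 1)) : ℚ)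
      = (1 / t) * ((d.choose (t - 1)) : ℚ) := by
    field_simp
    ring
  linarith [hsum', hfin]
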